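/- Let ψ be an Orlicz function satisfying the Δ²-condition, let c ≥ 1, and let φ : 𝔹_N → 𝔹_N be holomorphic. Then ψ⁻¹(1/(1−|φ(z)|)^c) / ψ⁻¹(1/(1−|z|)^c) → 0 as |z| → 1 if and only if ψ⁻¹(1/(1−|φ(z)|)) / ψ⁻¹(1/(1−|z|)) → 0 as |z| → 1. -/

import Mathlib

open Set Filter

/-- An Orlicz function: a strictly convex function `psi : [0,oo) -> [0,oo)` with `psi 0 = 0`,
`psi` continuous at `0`, and `psi x / x -> oo` as `x -> oo`. -/
def OrliczFunction (ψ : ℝ → ℝ) : Prop :=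
  StrictConvexOn ℝ (Ici 0) ψ ∧ (∀ x ∈ Ici (0:ℝ), 0 ≤ ψ x) ∧ ψ 0 = 0 ∧
    ContinuousWithinAt ψ (Ici 0) 0 ∧ Tendsto (fun x => ψ x / x) atTop atTop

/-- `ψinv` is the inverse of the Orlicz function `ψ`, viewed as an increasing bijection
of `[0,oo)` onto itself. -/
def OrliczInverse (ψ ψinv : ℝ → ℝ) : Prop :=
  (∀ x, 0 ≤ x → ψinv (ψ x) = x) ∧ (∀ y, 0 ≤ y → ψ (ψinv y) = y) ∧ (∀ y, 0 ≤ y → 0 ≤ ψinv y)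

/-- The nabla_0-condition. -/
def Nabla0 (ψ : ℝ → ℝ) : Prop :=
  ∀ B > (1:ℝ), ∃ C ≥ (1:ℝ), ∃ x₀ > (0:ℝ), ∀ x y : ℝ, x₀ ≤ x → x ≤ y →
    ψ (B * x) / ψ x ≤ ψ (C * B * y) / ψ y

/-- The uniform nabla_0-condition. -/
def UniformNabla0 (ψ : ℝ → ℝ) : Prop :=
  ∃ C ≥ (1:ℝ), ∀ B > (1:ℝ), ∃ x₀ > (0:ℝ), ∀ x y : ℝ, x₀ ≤ x → x ≤ y →
    ψ (B * x) / ψ x ≤ ψ (C * B * y) / ψ y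

/-- The nabla_2-condition. -/
def Nabla2 (ψ : ℝ → ℝ) : Prop :=
  ∃ β > (1:ℝ), ∃ x₀ > (0:ℝ), ∀ x ≥ x₀, 2 * β * ψ x ≤ ψ (β * x)

/-- The Delta_2-condition. -/
def Delta2 (ψ : ℝ → ℝ) : Prop :=
  ∃ K > (1:ℝ), ∃ x₀ > (0:ℝ), ∀ x ≥ x₀, ψ (2 * x) ≤ K * ψ x

/-- The Delta^2-condition. -/
def DeltaSquare (ψ : ℝ → ℝ) : Prop :=
  ∃ C > (0:ℝ), ∃ x₀ > (0:ℝ), ∀ x ≥ x₀, (ψ x) ^ 2 ≤ ψ (C * x)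

open MeasureTheory Set Filter Metric

/-- The non-isotropic ball `S(ζ,h) = {z ∈ B_N : |1 − ⟨z,ζ⟩| < h}`, where
`⟨z,ζ⟩ = Σ zᵢ conj ζᵢ` is the Hermitian inner product (i.e. `⟪ζ, z⟫` in Mathlib's
convention). -/
def nonisotropicBall (N : ℕ) (ζ : EuclideanSpace ℂ (Fin N)) (h : ℝ) :
    Set (EuclideanSpace ℂ (Fin N)) :=
  {z | ‖z‖ < 1 ∧ ‖(1 - (inner ℂ ζ z : ℂ))‖ < h}

/-- The weighted measure `(1−|z|²)^α dv` on the unit ball of `ℂ^N`. -/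
noncomputable def wBergman (N : ℕ) [MeasurableSpace (EuclideanSpace ℂ (Fin N))]
    [BorelSpace (EuclideanSpace ℂ (Fin N))] (α : ℝ) :
    Measure (EuclideanSpace ℂ (Fin N)) :=
  (volume.restrict (Metric.ball 0 1)).withDensity
    fun z => ENNReal.ofReal ((1 - ‖z‖ ^ 2) ^ α)

/-- The normalized weighted measure `v_α = c_α (1−|z|²)^α dv` on the unit ball of `ℂ^N`,
with `c_α` chosen so that `v_α(B_N) = 1`. -/
noncomputable def vBergman (N : ℕ) [MeasurableSpace (EuclideanSpace ℂ (Fin N))]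
    [BorelSpace (EuclideanSpace ℂ (Fin N))] (α : ℝ) :
    Measure (EuclideanSpace ℂ (Fin N)) :=
  (wBergman N α Set.univ)⁻¹ • wBergman N α

variable {ψ ψinv : ℝ → ℝ}

lemma aux_psi_pos (hψ : OrliczFunction ψ) (hinv : OrliczInverse ψ ψinv) :
    ∀ y : ℝ, 0 < y → 0 < ψ y := by
  intro y hy
  rcases (hψ.2.1 y hy.le).lt_or_eq with h | h
  · exact h
  · exfalso
    have e1 : ψinv 0 = y := by rw [h, hinv.1 y hy.le]
    have e2 : ψinv 0 = 0 := by
      calc ψinv 0 = ψinv (ψ 0) := by rw [hψ.2.2.1]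
        _ = 0 := hinv.1 0 le_rfl
    linarith [e1, e2]

lemma aux_psi_lt (hψ : OrliczFunction ψ) (hinv : OrliczInverse ψ ψinv) :
    ∀ x y : ℝ, 0 ≤ x → x < y → ψ x < ψ y := by
  intro x y hx hxy
  have hy : 0 < y := hx.trans_lt hxy
  rcases hx.lt_or_eq with hx' | hx'
  · have hb : 0 < x / y := div_pos hx' hy
    have hd : x / y < 1 := (div_lt_one hy).2 hxy
    have ha : (0:ℝ) < 1 - x / y := by linarith
    have hne : (0:ℝ) ≠ y := hy.ne
    have hcv := hψ.1.2 (self_mem_Ici) (by exact hy.le : y ∈ Ici (0:ℝ)) hne ha hb (by ring)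
    have hpt : (1 - x/y) • (0:ℝ) + (x/y) • y = x := by
      simp only [smul_eq_mul, mul_zero, zero_add]
      field_simp
    rw [hpt] at hcv
    simp only [smul_eq_mul, hψ.2.2.1, mul_zero, zero_add] at hcv
    have hψy := aux_psi_pos hψ hinv y hy
    nlinarith
  · rw [← hx', hψ.2.2.1]; exact aux_psi_pos hψ hinv y hy

lemma aux_psinv_mono (hψ : OrliczFunction ψ) (hinv : OrliczInverse ψ ψinv) :
    ∀ s t : ℝ, 0 ≤ s → s ≤ t → ψinv s ≤ ψinv t := by
  intro s t hs hst
  by_contra hlt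
  push_neg at hlt
  have := aux_psi_lt hψ hinv _ _ (hinv.2.2 t (hs.trans hst)) hlt
  rw [hinv.2.1 t (hs.trans hst), hinv.2.1 s hs] at this
  linarith

lemma aux_psinv_pos (hψ : OrliczFunction ψ) (hinv : OrliczInverse ψ ψinv) :
    ∀ y : ℝ, 0 < y → 0 < ψinv y := by
  intro y hy
  rcases (hinv.2.2 y hy.le).lt_or_eq with h | h
  · exact h
  · exfalso
    have h2 := hinv.2.1 y hy.le
    rw [← h, hψ.2.2.1] at h2
    linarith

lemma aux_sq (hψ : OrliczFunction ψ) (hinv : OrliczInverse ψ ψinv) (hΔ : DeltaSquare ψ) :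
    ∃ C ≥ (1:ℝ), ∃ t₀ ≥ (1:ℝ), ∀ t, t₀ ≤ t → ψinv (t ^ 2) ≤ C * ψinv t := by
  obtain ⟨C, hC, x₀, hx₀, hCx⟩ := hΔ
  refine ⟨max C 1, le_max_right _ _, max (ψ x₀) 1, le_max_right _ _, ?_⟩
  intro t ht
  have ht1 : (1:ℝ) ≤ t := le_trans (le_max_right _ _) ht
  have ht0 : (0:ℝ) ≤ t := by linarith
  have hxnn : 0 ≤ ψinv t := hinv.2.2 t ht0
  have hxx0 : x₀ ≤ ψinv t := by
    have h := aux_psinv_mono hψ hinv _ _ (hψ.2.1 x₀ hx₀.le) (le_trans (le_max_left _ _) ht)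
    rwa [hinv.1 x₀ hx₀.le] at h
  have h1 : ψ (ψinv t) ^ 2 ≤ ψ (C * ψinv t) := hCx _ hxx0
  have h2 : ψ (C * ψinv t) ≤ ψ (max C 1 * ψinv t) := by
    rcases eq_or_lt_of_le (mul_le_mul_of_nonneg_right (le_max_left C 1) hxnn) with h | h
    · rw [h]
    · exact (aux_psi_lt hψ hinv _ _ (mul_nonneg hC.le hxnn) h).le
  have ht' : ψ (ψinv t) = t := hinv.2.1 t ht0
  rw [ht'] at h1
  have hm : (0:ℝ) ≤ max C 1 * ψinv t :=
    mul_nonneg (le_trans zero_le_one (le_max_right C 1)) hxnn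
  have h3 : ψinv (t ^ 2) ≤ ψinv (ψ (max C 1 * ψinv t)) :=
    aux_psinv_mono hψ hinv _ _ (by positivity) (le_trans h1 h2)
  rwa [hinv.1 _ hm] at h3

lemma aux_pow (hψ : OrliczFunction ψ) (hinv : OrliczInverse ψ ψinv) (hΔ : DeltaSquare ψ)
    (c : ℝ) (hc : 1 ≤ c) :
    ∃ K ≥ (1:ℝ), ∃ t₀ ≥ (1:ℝ), ∀ t, t₀ ≤ t → ψinv (t ^ c) ≤ K * ψinv t := by
  obtain ⟨C, hC, t₀, ht₀, hkey⟩ := aux_sq hψ hinv hΔ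
  obtain ⟨k, hk⟩ := pow_unbounded_of_one_lt c (by norm_num : (1:ℝ) < 2)
  have hiter : ∀ n : ℕ, ∀ t, t₀ ≤ t → ψinv (t ^ (2 ^ n : ℕ)) ≤ C ^ n * ψinv t := by
    intro n
    induction n with
    | zero => intro t ht; simp
    | succ n ih =>
      intro t ht
      have ht1 : (1:ℝ) ≤ t := le_trans ht₀ ht
      have hs : t₀ ≤ t ^ (2 ^ n : ℕ) :=
        le_trans ht (le_self_pow₀ ht1 (pow_ne_zero n two_ne_zero))
      have h1 : ψinv ((t ^ (2 ^ n : ℕ)) ^ 2) ≤ C * ψinv (t ^ (2 ^ n : ℕ)) := hkey _ hs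
      have h2 : ψinv (t ^ (2 ^ n : ℕ)) ≤ C ^ n * ψinv t := ih t ht
      have heq : t ^ (2 ^ (n + 1) : ℕ) = (t ^ (2 ^ n : ℕ)) ^ 2 := by
        rw [← pow_mul, pow_succ]
      rw [heq, pow_succ]
      calc ψinv ((t ^ (2 ^ n : ℕ)) ^ 2) ≤ C * ψinv (t ^ (2 ^ n : ℕ)) := h1
        _ ≤ C * (C ^ n * ψinv t) := by
            exact mul_le_mul_of_nonneg_left h2 (by linarith)
        _ = C ^ n * C * ψinv t := by ring
  refine ⟨C ^ k, one_le_pow₀ hC, t₀, ht₀, ?_⟩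
  intro t ht
  have ht1 : (1:ℝ) ≤ t := le_trans ht₀ ht
  have h1 : t ^ c ≤ t ^ ((2 ^ k : ℕ) : ℝ) := by
    apply Real.rpow_le_rpow_of_exponent_le ht1
    push_cast
    exact hk.le
  rw [Real.rpow_natCast] at h1
  have h2 : ψinv (t ^ c) ≤ ψinv (t ^ (2 ^ k : ℕ)) :=
    aux_psinv_mono hψ hinv _ _ (Real.rpow_nonneg (by linarith) c) h1
  exact le_trans h2 (hiter k t ht)

/-- if `ψ` is an Orlicz function satisfying the `Δ²`-condition, `c ≥ 1`, and
`φ : B_N → B_N` is holomorphic, then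
`ψ⁻¹(1/(1−|φ z|)^c)/ψ⁻¹(1/(1−|z|)^c) → 0` as `|z| → 1` iff
`ψ⁻¹(1/(1−|φ z|))/ψ⁻¹(1/(1−|z|)) → 0` as `|z| → 1`. -/
theorem stmt15 (N : ℕ) (hN : 1 ≤ N)
    (ψ ψinv : ℝ → ℝ) (hψ : OrliczFunction ψ) (hinv : OrliczInverse ψ ψinv)
    (hΔ : DeltaSquare ψ) (c : ℝ) (hc : 1 ≤ c)
    (φ : EuclideanSpace ℂ (Fin N) → EuclideanSpace ℂ (Fin N))
    (hφd : DifferentiableOn ℂ φ (Metric.ball 0 1))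
    (hφm : MapsTo φ (Metric.ball 0 1) (Metric.ball 0 1)) :
    (∀ ε > (0:ℝ), ∃ r ∈ Ioo (0:ℝ) 1, ∀ z : EuclideanSpace ℂ (Fin N), ‖z‖ < 1 → r < ‖z‖ →
        ψinv (1 / (1 - ‖φ z‖) ^ c) / ψinv (1 / (1 - ‖z‖) ^ c) < ε) ↔
    (∀ ε > (0:ℝ), ∃ r ∈ Ioo (0:ℝ) 1, ∀ z : EuclideanSpace ℂ (Fin N), ‖z‖ < 1 → r < ‖z‖ →
        ψinv (1 / (1 - ‖φ z‖)) / ψinv (1 / (1 - ‖z‖)) < ε) := by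
  obtain ⟨K, hK, t₀, ht₀, hKey⟩ := aux_pow hψ hinv hΔ c hc
  have hKpos : (0:ℝ) < K := by linarith
  have ht₀pos : (0:ℝ) < t₀ := by linarith
  have hrw : ∀ a : ℝ, 0 < a → 1 / a ^ c = (1/a) ^ c := by
    intro a ha
    rw [one_div, one_div, ← Real.inv_rpow ha.le]
  -- basic facts for points in the ball
  have hbasic : ∀ z : EuclideanSpace ℂ (Fin N), ‖z‖ < 1 →
      0 < 1 - ‖φ z‖ ∧ (1:ℝ) ≤ 1 / (1 - ‖φ z‖) ∧ 0 < 1 - ‖z‖ ∧ (1:ℝ) ≤ 1 / (1 - ‖z‖) := by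
    intro z hz
    have hφz : ‖φ z‖ < 1 := by
      have := hφm (mem_ball_zero_iff.2 hz)
      exact mem_ball_zero_iff.1 this
    have h1 : 0 < 1 - ‖φ z‖ := by linarith
    have h2 : 0 < 1 - ‖z‖ := by linarith
    refine ⟨h1, ?_, h2, ?_⟩
    · rw [le_div_iff₀ h1]; linarith [norm_nonneg (φ z)]
    · rw [le_div_iff₀ h2]; linarith [norm_nonneg z]
  -- r₁ : threshold making 1/(1-‖z‖) > t₀
  have hthresh : ∀ T : ℝ, 0 < T → ∃ r₁ : ℝ, r₁ ∈ Ioo (0:ℝ) 1 ∧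
      ∀ z : EuclideanSpace ℂ (Fin N), ‖z‖ < 1 → r₁ < ‖z‖ → T < 1 / (1 - ‖z‖) := by
    intro T hT
    refine ⟨max (1 - 1/T) (1/2), ⟨lt_of_lt_of_le (by norm_num) (le_max_right _ _), ?_⟩, ?_⟩
    · apply max_lt _ (by norm_num)
      have : 0 < 1/T := by positivity
      linarith
    · intro z hz hrz
      have h2 : 0 < 1 - ‖z‖ := by linarith
      have hb : 1 - ‖z‖ < 1/T := by
        have := lt_of_le_of_lt (le_max_left (1 - 1/T) (1/2)) hrz
        linarith
      rw [lt_div_iff₀ h2]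
      have := (lt_div_iff₀ hT).1 hb
      linarith
  constructor
  · -- c-version → 1-version
    intro H ε hε
    obtain ⟨r₂, hr₂, hH⟩ := H (ε / K) (by positivity)
    obtain ⟨r₁, hr₁, hth⟩ := hthresh t₀ ht₀pos
    refine ⟨max r₁ r₂, ⟨lt_of_lt_of_le hr₁.1 (le_max_left _ _), max_lt hr₁.2 hr₂.2⟩, ?_⟩
    intro z hz hrz
    obtain ⟨h1φ, hua, h1z, hub⟩ := hbasic z hz
    set a := 1 - ‖φ z‖ with ha
    set b := 1 - ‖z‖ with hb
    have hgz : t₀ < 1/b := hth z hz (lt_of_le_of_lt (le_max_left _ _) hrz)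
    have hBc_le : ψinv ((1/b) ^ c) ≤ K * ψinv (1/b) := hKey _ hgz.le
    have hA_le : ψinv (1/a) ≤ ψinv ((1/a) ^ c) := by
      apply aux_psinv_mono hψ hinv _ _ (by linarith)
      calc 1/a = (1/a) ^ (1:ℝ) := (Real.rpow_one _).symm
        _ ≤ (1/a) ^ c := Real.rpow_le_rpow_of_exponent_le hua hc
    have hBpos : 0 < ψinv (1/b) := aux_psinv_pos hψ hinv _ (by linarith)
    have hBcpos : 0 < ψinv ((1/b) ^ c) := aux_psinv_pos hψ hinv _ (by positivity)
    have hAnn : 0 ≤ ψinv (1/a) := hinv.2.2 _ (by linarith)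
    have hmain := hH z hz (lt_of_le_of_lt (le_max_right r₁ r₂) hrz)
    rw [hrw a h1φ, hrw b h1z] at hmain
    have hmain' : ψinv ((1/a) ^ c) * K < ε * ψinv ((1/b) ^ c) :=
      (div_lt_div_iff₀ hBcpos hKpos).1 hmain
    rw [div_lt_iff₀ hBpos]
    -- ψinv (1/a) * K ≤ ψinv ((1/a)^c) * K < ε * ψinv ((1/b)^c) ≤ ε * (K * ψinv (1/b))
    have hstep : ε * ψinv ((1/b) ^ c) ≤ ε * (K * ψinv (1/b)) :=
      mul_le_mul_of_nonneg_left hBc_le hε.le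
    have hstep2 : ψinv (1/a) * K ≤ ψinv ((1/a) ^ c) * K :=
      mul_le_mul_of_nonneg_right hA_le hKpos.le
    nlinarith
  · -- 1-version → c-version
    intro H ε hε
    obtain ⟨r₂, hr₂, hH⟩ := H (ε / K) (by positivity)
    set M := ψinv (t₀ ^ c) with hM
    have hMnn : 0 ≤ M := hinv.2.2 _ (Real.rpow_nonneg ht₀pos.le c)
    set L := M / ε + 1 with hL
    have hLpos : (0:ℝ) < L := by positivity
    have hψL : 0 ≤ ψ L := hψ.2.1 L hLpos.le
    obtain ⟨r₃, hr₃, hth⟩ := hthresh (max (ψ L) 1) (by positivity)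
    refine ⟨max r₃ r₂, ⟨lt_of_lt_of_le hr₃.1 (le_max_left _ _), max_lt hr₃.2 hr₂.2⟩, ?_⟩
    intro z hz hrz
    obtain ⟨h1φ, hua, h1z, hub⟩ := hbasic z hz
    set a := 1 - ‖φ z‖ with ha
    set b := 1 - ‖z‖ with hb
    rw [hrw a h1φ, hrw b h1z]
    have hB_le : ψinv (1/b) ≤ ψinv ((1/b) ^ c) := by
      apply aux_psinv_mono hψ hinv _ _ (by linarith)
      calc 1/b = (1/b) ^ (1:ℝ) := (Real.rpow_one _).symm
        _ ≤ (1/b) ^ c := Real.rpow_le_rpow_of_exponent_le hub hc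
    have hBpos : 0 < ψinv (1/b) := aux_psinv_pos hψ hinv _ (by linarith)
    have hBcpos : 0 < ψinv ((1/b) ^ c) := aux_psinv_pos hψ hinv _ (by positivity)
    rw [div_lt_iff₀ hBcpos]
    rcases le_or_gt t₀ (1/a) with hcase | hcase
    · -- boundary case: use the hypothesis
      have hAc_le : ψinv ((1/a) ^ c) ≤ K * ψinv (1/a) := hKey _ hcase
      have hmain := hH z hz (lt_of_le_of_lt (le_max_right r₃ r₂) hrz)
      have hmain' : ψinv (1/a) * K < ε * ψinv (1/b) :=
        (div_lt_div_iff₀ hBpos hKpos).1 hmain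
      have hstep : ε * ψinv (1/b) ≤ ε * ψinv ((1/b) ^ c) :=
        mul_le_mul_of_nonneg_left hB_le hε.le
      nlinarith
    · -- bounded case: numerator bounded by M, denominator large
      have hAc_le : ψinv ((1/a) ^ c) ≤ M := by
        apply aux_psinv_mono hψ hinv _ _ (Real.rpow_nonneg (by linarith) c)
        exact Real.rpow_le_rpow (by linarith) hcase.le (by linarith)
      have hgz : max (ψ L) 1 < 1/b := hth z hz (lt_of_le_of_lt (le_max_left _ _) hrz)
      have hLB : L ≤ ψinv (1/b) := by
        have h := aux_psinv_mono hψ hinv _ _ hψL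
          (le_trans (le_max_left (ψ L) 1) hgz.le)
        rwa [hinv.1 L hLpos.le] at h
      have hLBc : L ≤ ψinv ((1/b) ^ c) := le_trans hLB hB_le
      have : M < ε * L := by
        rw [hL]
        have : ε * (M / ε) = M := by field_simp
        nlinarith
      calc ψinv ((1/a) ^ c) ≤ M := hAc_le
        _ < ε * L := this
        _ ≤ ε * ψinv ((1/b) ^ c) := mul_le_mul_of_nonneg_left hLBc hε.le
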